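/- Fix an integer k ≥ 3, d > 0 and β ≥ 0, let m = ⌈dn/k⌉, and let ε > 0. Let B̄_ε be the set of all σ : [n] → {−1,1} with ||σ^{-1}(1)| − n/2| > εn, and let Z_{β,B̄_ε}(H) = Σ_{σ ∈ B̄_ε} exp(−β E_H(σ)). Then there exist δ > 0 and n0 such that for all n ≥ n0: E[Z_{β,B̄_ε}(H_k(n,m))] ≤ exp(−δ·n)·E[Z_β(H_k(n,m))]. -/

import Mathlib

noncomputable section

open Finset Filter Real
open scoped Classical BigOperators

/-- The set of all `k`-element subsets of `Fin n` (the potential edges of a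
`k`-uniform hypergraph on `[n]`). -/
def kSets (n k : ℕ) : Finset (Finset (Fin n)) :=
  Finset.univ.filter fun e => e.card = k

/-- An edge is monochromatic under the 2-coloring `σ`. -/
def isMono {n : ℕ} (σ : Fin n → Bool) (e : Finset (Fin n)) : Prop :=
  ∀ v ∈ e, ∀ w ∈ e, σ v = σ w

/-- The number `E_H(σ)` of monochromatic edges of the hypergraph `H` under `σ`. -/
def monoCount {n : ℕ} (H : Finset (Finset (Fin n))) (σ : Fin n → Bool) : ℕ :=
  (H.filter fun e => isMono σ e).card

/-- The partition function `Z_β(H)`. -/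
def Zp {n : ℕ} (β : ℝ) (H : Finset (Finset (Fin n))) : ℝ :=
  ∑ τ : Fin n → Bool, Real.exp (-β * (monoCount H τ : ℝ))

/-- Probability of obtaining the hypergraph `H` in the binomial model `H_k(n,p)`. -/
def probHnp (n k : ℕ) (p : ℝ) (H : Finset (Finset (Fin n))) : ℝ :=
  if H ⊆ kSets n k then p ^ H.card * (1 - p) ^ ((kSets n k).card - H.card) else 0

/-- Expectation of `f` over `H_k(n,p)`. -/
def expHnp (n k : ℕ) (p : ℝ) (f : Finset (Finset (Fin n)) → ℝ) : ℝ :=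
  ∑ H : Finset (Finset (Fin n)), probHnp n k p H * f H

/-- Probability of an event under `H_k(n,p)`. -/
def prHnp (n k : ℕ) (p : ℝ) (A : Finset (Finset (Fin n)) → Prop) : ℝ :=
  expHnp n k p fun H => if A H then 1 else 0

/-- The edge probability `p = d / C(n-1,k-1)`. -/
def pEdge (n k : ℕ) (d : ℝ) : ℝ := d / ((n - 1).choose (k - 1) : ℝ)

/-- The first-moment value `ln 2 + (d/k)·ln(1 − 2^{1−k}(1 − e^{−β}))`. -/
def phiBound (k : ℕ) (d β : ℝ) : ℝ :=
  Real.log 2 + d / k * Real.log (1 - (2:ℝ) ^ ((1:ℤ) - k) * (1 - Real.exp (-β)))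

/-- The sequence `n ↦ (1/n)·E[ln Z_β(H_k(n,p))]` with `p = d/C(n-1,k-1)`. -/
def freeEnergySeq (k : ℕ) (d β : ℝ) (n : ℕ) : ℝ :=
  expHnp n k (pEdge n k d) (fun H => Real.log (Zp β H)) / n

/-- The function `Σ_{k,d}(β)`. -/
def SigmaKD (k : ℕ) (d β : ℝ) : ℝ :=
  (β + 1) * Real.exp (-β + k * Real.log 2) * Real.log 2
    - 2 * (d / k - (2:ℝ) ^ (k - 1) * Real.log 2 + Real.log 2)

/-- `m = ⌈dn/k⌉`. -/
def mOf (d : ℝ) (k n : ℕ) : ℕ := ⌈d * n / (k:ℝ)⌉₊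

/-- Number of monochromatic edges, with multiplicity, of a multi-hypergraph given as a
tuple of `m` edges. -/
def monoCountM {n m : ℕ} (H : Fin m → Finset (Fin n)) (σ : Fin n → Bool) : ℕ :=
  (Finset.univ.filter fun i : Fin m => isMono σ (H i)).card

/-- Partition function of a multi-hypergraph. -/
def ZpM {n m : ℕ} (β : ℝ) (H : Fin m → Finset (Fin n)) : ℝ :=
  ∑ τ : Fin n → Bool, Real.exp (-β * (monoCountM H τ : ℝ))

/-- Expectation over `H'_k(n,m)`: `m` edges chosen uniformly and independently with
replacement from all `k`-subsets of `[n]`. -/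
def expHM (n k m : ℕ) (f : (Fin m → Finset (Fin n)) → ℝ) : ℝ :=
  ∑ H : Fin m → Finset (Fin n),
    (∏ i : Fin m, if H i ∈ kSets n k then ((kSets n k).card : ℝ)⁻¹ else 0) * f H

/-- Probability of `H` under `H_k(n,m)`: `m` distinct edges chosen uniformly without
replacement. -/
def probHnm (n k m : ℕ) (H : Finset (Finset (Fin n))) : ℝ :=
  if H ⊆ kSets n k ∧ H.card = m then ((kSets n k).card.choose m : ℝ)⁻¹ else 0

/-- Expectation of `f` over `H_k(n,m)`. -/
def expHnm (n k m : ℕ) (f : Finset (Finset (Fin n)) → ℝ) : ℝ :=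
  ∑ H : Finset (Finset (Fin n)), probHnm n k m H * f H

/-- Number of vertices with color `true` (i.e. `|σ⁻¹(1)|`). -/
def numPlus {n : ℕ} (σ : Fin n → Bool) : ℕ :=
  (Finset.univ.filter fun v => σ v = true).card

/-- A coloring is balanced if `||σ⁻¹(1)| − n/2| ≤ √n`. -/
def isBalanced {n : ℕ} (σ : Fin n → Bool) : Prop :=
  |(numPlus σ : ℝ) - n / 2| ≤ Real.sqrt n

/-- The overlap `⟨σ,τ⟩ = ∑_v σ(v)τ(v)`. -/
def overlap {n : ℕ} (σ τ : Fin n → Bool) : ℤ :=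
  ∑ _v ∈ Finset.univ.filter (fun v : Fin n => σ v = τ v), (1:ℤ) +
    ∑ _v ∈ Finset.univ.filter (fun v : Fin n => σ v ≠ τ v), (-1:ℤ)

/-- The cluster size `C_β(H,σ)`. -/
def clusterSize {n : ℕ} (β : ℝ) (H : Finset (Finset (Fin n))) (σ : Fin n → Bool) : ℝ :=
  ∑ τ : Fin n → Bool,
    if 2 * (n:ℝ) / 3 ≤ (overlap σ τ : ℝ) then Real.exp (-β * (monoCount H τ : ℝ)) else 0

/-- The entropy function `H(z)`. -/
def entH (z : ℝ) : ℝ := -z * Real.log z - (1 - z) * Real.log (1 - z)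

/-- The second-moment exponent `Λ_β(α)`. -/
def Lam (k : ℕ) (d β α : ℝ) : ℝ :=
  entH ((1 + α) / 2) +
    d / k * Real.log (1 - (2:ℝ) ^ ((1:ℤ) - k) * (1 - Real.exp (-β)) *
      (2 - (1 - Real.exp (-β)) * ((1 + α) ^ k + (1 - α) ^ k) / 2 ^ k))

/-- The pair partition function `Z_β(α)` with `α = 2ν/n − 1`, i.e. overlap `2ν − n`. -/
def Zpair {n m : ℕ} (β : ℝ) (ν : ℕ) (H : Fin m → Finset (Fin n)) : ℝ :=
  ∑ σ : Fin n → Bool, ∑ τ : Fin n → Bool,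
    if isBalanced σ ∧ isBalanced τ ∧ overlap σ τ = 2 * (ν:ℤ) - (n:ℤ) then
      Real.exp (-β * ((monoCountM H σ : ℝ) + (monoCountM H τ : ℝ)))
    else 0

/-- Partition function of a multi-hypergraph restricted to balanced colorings. -/
def ZpMbal {n m : ℕ} (β : ℝ) (H : Fin m → Finset (Fin n)) : ℝ :=
  ∑ τ : Fin n → Bool,
    if isBalanced τ then Real.exp (-β * (monoCountM H τ : ℝ)) else 0

/-- `m₀ = 2^{1−k}·e^{−β}·m/(1 − 2^{1−k}(1 − e^{−β}))`. -/
def m0Of (k : ℕ) (β : ℝ) (m : ℕ) : ℝ :=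
  (2:ℝ) ^ ((1:ℤ) - k) * Real.exp (-β) * m / (1 - (2:ℝ) ^ ((1:ℤ) - k) * (1 - Real.exp (-β)))

/-- The probability `p₁` of a monochromatic edge in the planted model. -/
def p1Planted (n k : ℕ) (d β : ℝ) : ℝ :=
  Real.exp (-β) * d /
    ((1 - (2:ℝ) ^ ((1:ℤ) - k) * (1 - Real.exp (-β))) * ((n - 1).choose (k - 1) : ℝ))

/-- The probability `p₂` of a bichromatic edge in the planted model. -/
def p2Planted (n k : ℕ) (d β : ℝ) : ℝ :=
  d / ((1 - (2:ℝ) ^ ((1:ℤ) - k) * (1 - Real.exp (-β))) * ((n - 1).choose (k - 1) : ℝ))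

/-- Conditional probability of the hypergraph `H` in the planted model given the planted
coloring `σ`: monochromatic edges appear with probability `q1`, bichromatic ones with `q2`. -/
def probPlanted (n k : ℕ) (q1 q2 : ℝ) (σ : Fin n → Bool)
    (H : Finset (Finset (Fin n))) : ℝ :=
  if H ⊆ kSets n k then
    (∏ e ∈ (kSets n k).filter (fun e => isMono σ e), if e ∈ H then q1 else 1 - q1) *
      ∏ e ∈ (kSets n k).filter (fun e => ¬ isMono σ e), if e ∈ H then q2 else 1 - q2
  else 0

/-- Probability of an event in the planted model `(σ̂, G)`. -/
def prPlanted (n k : ℕ) (q1 q2 : ℝ)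
    (A : (Fin n → Bool) → Finset (Finset (Fin n)) → Prop) : ℝ :=
  ∑ σ : Fin n → Bool, ∑ H : Finset (Finset (Fin n)),
    ((2:ℝ)⁻¹) ^ n * probPlanted n k q1 q2 σ H * (if A σ H then 1 else 0)

/-- `β_crit(d,k)`, as an extended real (so `⊤ = ∞` if the set is empty). -/
def betaCrit (k : ℕ) (d : ℝ) : EReal :=
  sInf ((fun β : ℝ => (β : EReal)) ''
    {β : ℝ | 0 < β ∧ limsup (freeEnergySeq k d β) atTop < phiBound k d β})

/-- `v` supports the edge `e`: `v ∈ e` and every other vertex of `e` has color `−σ(v)`. -/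
def supportsEdge {n : ℕ} (σ : Fin n → Bool) (v : Fin n) (e : Finset (Fin n)) : Prop :=
  v ∈ e ∧ ∀ w ∈ e, w ≠ v → σ w = !(σ v)

/-- An edge `e` is `U`-endangered: all vertices of `U ∩ e` have the same color. -/
def endangered {n : ℕ} (σ : Fin n → Bool) (U : Finset (Fin n)) (e : Finset (Fin n)) : Prop :=
  ∀ v ∈ U ∩ e, ∀ w ∈ U ∩ e, σ v = σ w

/-- A set `V'` satisfying the two core conditions CR1 and CR2. -/
def goodSet {n : ℕ} (H : Finset (Finset (Fin n))) (σ : Fin n → Bool)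
    (V' : Finset (Fin n)) : Prop :=
  (∀ v ∈ V', 100 ≤ (H.filter fun e => supportsEdge σ v e ∧ e ⊆ V').card) ∧
    ∀ v ∈ V', (H.filter fun e => v ∈ e ∧ endangered σ V' e).card ≤ 10

/-- The core: the largest set satisfying CR1 and CR2 (the union of all such sets). -/
def coreSet {n : ℕ} (H : Finset (Finset (Fin n))) (σ : Fin n → Bool) : Finset (Fin n) :=
  Finset.univ.filter fun v => ∃ V', goodSet H σ V' ∧ v ∈ V'

/-- The backbone: vertices outside the core supporting an edge into the core and occurring
in no `({v} ∪ core)`-endangered edge. -/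
def backboneSet {n : ℕ} (H : Finset (Finset (Fin n))) (σ : Fin n → Bool) : Finset (Fin n) :=
  Finset.univ.filter fun v => v ∉ coreSet H σ ∧
    (∃ e ∈ H, supportsEdge σ v e ∧ e \ {v} ⊆ coreSet H σ) ∧
    ∀ e ∈ H, v ∈ e → ¬ endangered σ (insert v (coreSet H σ)) e

/-- The remaining vertices. -/
def restSet {n : ℕ} (H : Finset (Finset (Fin n))) (σ : Fin n → Bool) : Finset (Fin n) :=
  Finset.univ \ (coreSet H σ ∪ backboneSet H σ)

/-- The free vertices: vertices of the rest all of whose edges meet the core in a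
bichromatic set. -/
def freeSet {n : ℕ} (H : Finset (Finset (Fin n))) (σ : Fin n → Bool) : Finset (Fin n) :=
  (restSet H σ).filter fun v => ∀ e ∈ H, v ∈ e →
    ∃ w1 ∈ e ∩ coreSet H σ, ∃ w2 ∈ e ∩ coreSet H σ, σ w1 ≠ σ w2


namespace Aux7

/-- The key quantity: sum over hypergraphs of `x ^ |H ∩ A|`. -/
def Fx (n k m : ℕ) (x : ℝ) (A : Finset (Finset (Fin n))) : ℝ :=
  ∑ H ∈ (kSets n k).powersetCard m, x ^ (H ∩ A).card

lemma Fx_nonneg (hx : 0 ≤ x) (A : Finset (Finset (Fin n))) : 0 ≤ Fx n k m x A :=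
  Finset.sum_nonneg fun _ _ => pow_nonneg hx _

lemma Fx_antitone (hx0 : 0 ≤ x) (hx1 : x ≤ 1) {A B : Finset (Finset (Fin n))}
    (hAB : A ⊆ B) : Fx n k m x B ≤ Fx n k m x A := by
  refine Finset.sum_le_sum fun H _ => ?_
  exact pow_le_pow_of_le_one hx0 hx1
    (Finset.card_le_card (Finset.inter_subset_inter (le_refl H) hAB))

lemma fiber_card (A K : Finset (Finset (Fin n))) (hKA : K ⊆ A) (hAS : A ⊆ kSets n k) :
    (((kSets n k).powersetCard m).filter (fun H => H ∩ A = K)).card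
      = if K.card ≤ m then ((kSets n k) \ A).card.choose (m - K.card) else 0 := by
  by_cases hKm : K.card ≤ m
  · rw [if_pos hKm, ← Finset.card_powersetCard]
    refine Finset.card_bij' (fun H _ => H \ A) (fun H₂ _ => K ∪ H₂) ?_ ?_ ?_ ?_
    · intro H hH
      simp only [Finset.mem_filter, Finset.mem_powersetCard] at hH
      obtain ⟨⟨hHS, hHc⟩, hHA⟩ := hH
      rw [Finset.mem_powersetCard]
      constructor
      · exact Finset.sdiff_subset_sdiff hHS (le_refl _)
      · have h1 := Finset.card_inter_add_card_sdiff H A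
        rw [hHA] at h1
        omega
    · intro H₂ hH₂
      simp only [Finset.mem_powersetCard] at hH₂
      obtain ⟨hH₂S, hH₂c⟩ := hH₂
      have hdisj : Disjoint K H₂ := by
        refine Finset.disjoint_left.mpr fun e heK heH₂ => ?_
        exact (Finset.mem_sdiff.mp (hH₂S heH₂)).2 (hKA heK)
      simp only [Finset.mem_filter, Finset.mem_powersetCard]
      refine ⟨⟨?_, ?_⟩, ?_⟩
      · exact Finset.union_subset (hKA.trans hAS) (hH₂S.trans (Finset.sdiff_subset))
      · rw [Finset.card_union_of_disjoint hdisj, hH₂c]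
        omega
      · rw [Finset.union_inter_distrib_right]
        have h1 : K ∩ A = K := Finset.inter_eq_left.mpr hKA
        have h2 : H₂ ∩ A = ∅ := by
          refine Finset.eq_empty_of_forall_notMem fun e he => ?_
          have := Finset.mem_inter.mp he
          exact (Finset.mem_sdiff.mp (hH₂S this.1)).2 this.2
        rw [h1, h2, Finset.union_empty]
    · intro H hH
      simp only [Finset.mem_filter, Finset.mem_powersetCard] at hH
      show K ∪ H \ A = H
      rw [← hH.2]
      ext a
      simp only [Finset.mem_union, Finset.mem_inter, Finset.mem_sdiff]
      tauto
    · intro H₂ hH₂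
      simp only [Finset.mem_powersetCard] at hH₂
      show (K ∪ H₂) \ A = H₂
      rw [Finset.union_sdiff_distrib]
      have h1 : K \ A = ∅ := Finset.sdiff_eq_empty_iff_subset.mpr hKA
      have h2 : H₂ \ A = H₂ := by
        refine Finset.sdiff_eq_self_iff_disjoint.mpr (Finset.disjoint_left.mpr ?_)
        intro e he
        exact (Finset.mem_sdiff.mp (hH₂.1 he)).2
      rw [h1, h2, Finset.empty_union]
  · rw [if_neg hKm]
    rw [Finset.card_eq_zero, Finset.filter_eq_empty_iff]
    intro H hH
    simp only [Finset.mem_powersetCard] at hH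
    intro hHA
    apply hKm
    rw [← hHA, ← hH.2]
    exact Finset.card_le_card (Finset.inter_subset_left)

/-- `Fx` depends only on the cardinality of `A`. -/
lemma Fx_eq_gform (A : Finset (Finset (Fin n))) (hAS : A ⊆ kSets n k) :
    Fx n k m x A = ∑ j ∈ Finset.range (A.card + 1),
      (A.card.choose j) •
        ((if j ≤ m then (((kSets n k).card - A.card).choose (m - j) : ℝ) else 0) * x ^ j) := by
  have hmaps : ∀ H ∈ (kSets n k).powersetCard m, H ∩ A ∈ A.powerset := by
    intro H _; exact Finset.mem_powerset.mpr Finset.inter_subset_right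
  have h1 : Fx n k m x A = ∑ K ∈ A.powerset,
      ∑ H ∈ ((kSets n k).powersetCard m).filter (fun H => H ∩ A = K), x ^ (H ∩ A).card :=
    (Finset.sum_fiberwise_of_maps_to hmaps _).symm
  have h2 : ∀ K ∈ A.powerset,
      (∑ H ∈ ((kSets n k).powersetCard m).filter (fun H => H ∩ A = K), x ^ (H ∩ A).card)
      = (if K.card ≤ m then (((kSets n k).card - A.card).choose (m - K.card) : ℝ) else 0)
          * x ^ K.card := by
    intro K hK
    have hKA := Finset.mem_powerset.mp hK
    have : ∀ H ∈ ((kSets n k).powersetCard m).filter (fun H => H ∩ A = K),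
        x ^ (H ∩ A).card = x ^ K.card := by
      intro H hH
      rw [(Finset.mem_filter.mp hH).2]
    rw [Finset.sum_congr rfl this, Finset.sum_const, fiber_card A K hKA hAS,
      Finset.card_sdiff_of_subset hAS]
    split_ifs with h
    · rw [nsmul_eq_mul]
    · simp
  rw [h1, Finset.sum_congr rfl h2, Finset.sum_powerset_apply_card
    (fun j => (if j ≤ m then (((kSets n k).card - A.card).choose (m - j) : ℝ) else 0) * x ^ j)]

lemma Fx_card_eq {A B : Finset (Finset (Fin n))} (hAS : A ⊆ kSets n k)
    (hBS : B ⊆ kSets n k) (hcard : A.card = B.card) :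
    Fx n k m x A = Fx n k m x B := by
  rw [Fx_eq_gform A hAS, Fx_eq_gform B hBS, hcard]

lemma Fx_le_of_card_le (hx0 : 0 ≤ x) (hx1 : x ≤ 1) {A B : Finset (Finset (Fin n))}
    (hAS : A ⊆ kSets n k) (hBS : B ⊆ kSets n k) (hBA : B.card ≤ A.card) :
    Fx n k m x A ≤ Fx n k m x B := by
  obtain ⟨A', hA'A, hA'c⟩ := Finset.exists_subset_card_eq (hBA.trans (le_refl _))
  calc Fx n k m x A ≤ Fx n k m x A' := Fx_antitone hx0 hx1 hA'A
    _ = Fx n k m x B := Fx_card_eq (hA'A.trans hAS) hBS (hA'c)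


/-- The set of monochromatic potential edges. -/
def monoS {n : ℕ} (k : ℕ) (σ : Fin n → Bool) : Finset (Finset (Fin n)) :=
  (kSets n k).filter fun e => isMono σ e

lemma numPlus_le (n : ℕ) (σ : Fin n → Bool) : numPlus σ ≤ n := by
  have := Finset.card_filter_le (Finset.univ : Finset (Fin n)) (fun v => σ v = true)
  simpa [numPlus] using this

lemma monoS_card {n k : ℕ} (hk : 1 ≤ k) (σ : Fin n → Bool) :
    (monoS k σ).card = (numPlus σ).choose k + (n - numPlus σ).choose k := by
  classical
  set Pp := Finset.univ.filter (fun v : Fin n => σ v = true) with hPp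
  set Pm := Finset.univ.filter (fun v : Fin n => ¬ (σ v = true)) with hPm
  have hsplit : monoS k σ = Pp.powersetCard k ∪ Pm.powersetCard k := by
    ext e
    simp only [monoS, kSets, Finset.mem_filter, Finset.mem_union, Finset.mem_powersetCard,
      Finset.mem_univ, true_and]
    constructor
    · rintro ⟨hcard, hmono⟩
      have hne : e.Nonempty := Finset.card_pos.mp (by omega)
      obtain ⟨v₀, hv₀⟩ := hne
      by_cases hb : σ v₀ = true
      · left
        refine ⟨fun w hw => ?_, hcard⟩
        simp only [hPp, Finset.mem_filter, Finset.mem_univ, true_and]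
        rw [hmono w hw v₀ hv₀]; exact hb
      · right
        refine ⟨fun w hw => ?_, hcard⟩
        simp only [hPm, Finset.mem_filter, Finset.mem_univ, true_and]
        rw [hmono w hw v₀ hv₀]; exact hb
    · rintro (⟨hsub, hcard⟩ | ⟨hsub, hcard⟩)
      · refine ⟨hcard, fun v hv w hw => ?_⟩
        have h1 := hsub hv; have h2 := hsub hw
        simp only [hPp, Finset.mem_filter, Finset.mem_univ, true_and] at h1 h2
        rw [h1, h2]
      · refine ⟨hcard, fun v hv w hw => ?_⟩
        have h1 := hsub hv; have h2 := hsub hw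
        simp only [hPm, Finset.mem_filter, Finset.mem_univ, true_and] at h1 h2
        rw [Bool.not_eq_true] at h1 h2
        rw [h1, h2]
  have hdisj : Disjoint (Pp.powersetCard k) (Pm.powersetCard k) := by
    refine Finset.disjoint_left.mpr fun e he1 he2 => ?_
    rw [Finset.mem_powersetCard] at he1 he2
    have hne : e.Nonempty := Finset.card_pos.mp (by omega)
    obtain ⟨v₀, hv₀⟩ := hne
    have h1 := he1.1 hv₀; have h2 := he2.1 hv₀
    simp only [hPp, hPm, Finset.mem_filter] at h1 h2
    exact h2.2 h1.2
  have hPmcard : Pm.card = n - numPlus σ := by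
    have := Finset.card_filter_add_card_filter_not
      (s := (Finset.univ : Finset (Fin n))) (p := fun v => σ v = true)
    simp only [Finset.card_univ, Fintype.card_fin] at this
    rw [← hPp, ← hPm] at this
    have h2 : numPlus σ = Pp.card := rfl
    omega
  rw [hsplit, Finset.card_union_of_disjoint hdisj, Finset.card_powersetCard,
    Finset.card_powersetCard, hPmcard]
  rfl

lemma monoS_subset {n k : ℕ} (σ : Fin n → Bool) : monoS k σ ⊆ kSets n k :=
  Finset.filter_subset _ _

/-- Number of colorings with a given number of pluses. -/
lemma slice_card (n a : ℕ) (ha : a ≤ n) :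
    ((Finset.univ : Finset (Fin n → Bool)).filter fun σ => numPlus σ = a).card
      = n.choose a := by
  classical
  have : ((Finset.univ : Finset (Fin n)).powersetCard a).card = n.choose a := by
    rw [Finset.card_powersetCard, Finset.card_univ, Fintype.card_fin]
  rw [← this]
  refine Finset.card_bij' (fun σ _ => Finset.univ.filter fun v => σ v = true)
    (fun s _ => fun v => decide (v ∈ s)) ?_ ?_ ?_ ?_
  · intro σ hσ
    simp only [Finset.mem_filter, Finset.mem_univ, true_and] at hσ
    rw [Finset.mem_powersetCard]
    exact ⟨Finset.subset_univ _, hσ⟩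
  · intro s hs
    rw [Finset.mem_powersetCard] at hs
    refine Finset.mem_filter.mpr ⟨Finset.mem_univ _, ?_⟩
    simp only [Finset.mem_filter, Finset.mem_univ, true_and, numPlus]
    rw [← hs.2]
    congr 1
    ext v
    simp
  · intro σ _
    funext v
    simp only [Finset.mem_filter, Finset.mem_univ, true_and]
    by_cases h : σ v = true
    · simp [h]
    · simp [h]
  · intro s _
    ext v
    simp

/-- Unimodality: `C(a,k)+C(n-a,k)` is minimized at `a = n/2`. -/
lemma unimodal {n k : ℕ} (hk : 1 ≤ k) :
    ∀ a ≤ n, (n / 2).choose k + (n - n / 2).choose k ≤ a.choose k + (n - a).choose k := by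
  obtain ⟨k', rfl⟩ : ∃ k', k = k' + 1 := ⟨k - 1, by omega⟩
  have step : ∀ b, n / 2 ≤ b → b.choose (k' + 1) + (n - b).choose (k' + 1)
      ≤ (b + 1).choose (k' + 1) + (n - (b + 1)).choose (k' + 1) := by
    intro b hb
    rw [Nat.choose_succ_succ' (b) (k')]
    by_cases hnb : n - b = 0
    · have : n - (b + 1) = 0 := by omega
      rw [hnb, this]
      omega
    · obtain ⟨t, ht⟩ : ∃ t, n - b = t + 1 := ⟨n - b - 1, by omega⟩
      have ht2 : n - (b + 1) = t := by omega
      rw [ht, ht2, Nat.choose_succ_succ' (t) (k')]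
      have htb : t ≤ b := by omega
      have := Nat.choose_le_choose k' htb
      omega
  have mono : ∀ b, n / 2 ≤ b →
      (n / 2).choose (k' + 1) + (n - n / 2).choose (k' + 1)
        ≤ b.choose (k' + 1) + (n - b).choose (k' + 1) := by
    intro b hb
    induction b with
    | zero =>
      have h0 : n / 2 = 0 := Nat.le_zero.mp hb
      exact le_of_eq (by rw [h0])
    | succ b ih =>
      rcases Nat.lt_or_ge b (n / 2) with h | h
      · have h1 : n / 2 = b + 1 := by omega
        exact le_of_eq (by rw [h1])
      · exact le_trans (ih h) (step b h)
  intro a ha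
  rcases Nat.lt_or_ge a (n / 2) with h | h
  · have h1 : n / 2 ≤ n - a := by omega
    have h2 : n - (n - a) = a := by omega
    have := mono (n - a) h1
    rw [h2] at this
    omega
  · exact mono a h


lemma per_unit {ε : ℝ} (hε : 0 < ε) (hε2 : ε ≤ 1/2) :
    Real.log (2 - ε) + (1/2 - ε) * (-Real.log (1 - ε)) ≤ Real.log 2 - ε^2/2 := by
  have hpos : (0:ℝ) < 1 - ε := by linarith
  have h1 : Real.log (2 - ε) ≤ Real.log 2 - ε/2 := by
    have he : (2:ℝ) - ε = 2 * (1 - ε/2) := by ring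
    rw [he, Real.log_mul two_ne_zero (by norm_num; linarith : (1:ℝ) - ε/2 ≠ 0)]
    have := Real.log_le_sub_one_of_pos (show (0:ℝ) < 1 - ε/2 by linarith)
    linarith
  have h2 : -Real.log (1 - ε) ≤ ε / (1 - ε) := by
    rw [← Real.log_inv]
    have hl := Real.log_le_sub_one_of_pos (inv_pos.mpr hpos)
    have he : (1 - ε)⁻¹ - 1 = ε / (1 - ε) := by field_simp; ring
    linarith
  have h3 : (1/2 - ε) * (ε / (1 - ε)) ≤ ε/2 - ε^2/2 := by
    have he : (1/2 - ε) * (ε / (1 - ε)) = ((1/2 - ε) * ε) / (1 - ε) := by ring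
    rw [he, div_le_iff₀ hpos]
    nlinarith
  have h4 : (1/2 - ε) * (-Real.log (1 - ε)) ≤ (1/2 - ε) * (ε / (1 - ε)) :=
    mul_le_mul_of_nonneg_left h2 (by linarith)
  linarith

lemma choose_single {x : ℝ} (hx : 0 ≤ x) {n a : ℕ} (ha : a ≤ n) :
    (n.choose a : ℝ) * x ^ a ≤ (1 + x) ^ n := by
  have h := add_pow x 1 n
  have hmem : a ∈ Finset.range (n + 1) := Finset.mem_range.mpr (by omega)
  have hterm := Finset.single_le_sum
    (f := fun i => x ^ i * 1 ^ (n - i) * (n.choose i : ℝ))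
    (fun i _ => by positivity) hmem
  rw [← h] at hterm
  calc (n.choose a : ℝ) * x ^ a = x ^ a * 1 ^ (n - a) * (n.choose a : ℝ) := by ring
    _ ≤ (x + 1) ^ n := hterm
    _ = (1 + x) ^ n := by ring

lemma tail_low {ε : ℝ} (hε : 0 < ε) (hε2 : ε ≤ 1/2) {n a : ℕ} (han : a ≤ n)
    (ha : (a:ℝ) ≤ (n:ℝ)/2 - ε * n) :
    (n.choose a : ℝ) ≤ 2 ^ n * Real.exp (-(ε^2/2) * n) := by
  set x : ℝ := 1 - ε with hxdef
  have hx0 : 0 < x := by rw [hxdef]; linarith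
  have hx1 : x ≤ 1 := by rw [hxdef]; linarith
  have step1 : (n.choose a : ℝ) ≤ (1 + x) ^ n * (x⁻¹) ^ a := by
    have h := choose_single hx0.le han
    have hxa : (0:ℝ) < x ^ a := pow_pos hx0 a
    rw [inv_pow, ← div_eq_mul_inv, le_div_iff₀ hxa]
    exact h
  have step2 : (x⁻¹) ^ a ≤ (x⁻¹) ^ ((n:ℝ)/2 - ε * n) := by
    rw [← Real.rpow_natCast x⁻¹ a]
    exact Real.rpow_le_rpow_of_exponent_le ((one_le_inv₀ hx0).mpr hx1) ha
  have hxinv : (0:ℝ) < x⁻¹ := inv_pos.mpr hx0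
  have step3 : (1 + x) ^ n * (x⁻¹) ^ ((n:ℝ)/2 - ε * n)
      ≤ 2 ^ n * Real.exp (-(ε^2/2) * n) := by
    have h2me : (0:ℝ) < 2 - ε := by linarith
    have hx2 : 1 + x = 2 - ε := by rw [hxdef]; ring
    have e1 : (1 + x) ^ n = Real.exp ((n:ℝ) * Real.log (2 - ε)) := by
      rw [hx2, Real.exp_nat_mul, Real.exp_log h2me]
    have e2 : (x⁻¹) ^ ((n:ℝ)/2 - ε * n)
        = Real.exp (((n:ℝ)/2 - ε * n) * (-Real.log (1 - ε))) := by
      rw [Real.rpow_def_of_pos hxinv, Real.log_inv, hxdef, mul_comm]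
    have e3 : (2:ℝ) ^ n = Real.exp ((n:ℝ) * Real.log 2) := by
      rw [Real.exp_nat_mul, Real.exp_log two_pos]
    rw [e1, e2, e3, ← Real.exp_add, ← Real.exp_add, Real.exp_le_exp]
    have hpu := per_unit hε hε2
    have hn0 : (0:ℝ) ≤ n := Nat.cast_nonneg n
    have := mul_le_mul_of_nonneg_left hpu hn0
    nlinarith
  calc (n.choose a : ℝ) ≤ (1 + x) ^ n * (x⁻¹) ^ a := step1
    _ ≤ (1 + x) ^ n * (x⁻¹) ^ ((n:ℝ)/2 - ε * n) := by
        apply mul_le_mul_of_nonneg_left step2 (by positivity)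
    _ ≤ 2 ^ n * Real.exp (-(ε^2/2) * n) := step3

lemma tail_bound {ε : ℝ} (hε : 0 < ε) (hε2 : ε ≤ 1/2) {n a : ℕ} (han : a ≤ n)
    (h : ε * n < |(a:ℝ) - (n:ℝ)/2|) :
    (n.choose a : ℝ) ≤ 2 ^ n * Real.exp (-(ε^2/2) * n) := by
  rcases le_or_gt (a:ℝ) ((n:ℝ)/2) with hl | hh
  · have habs : |(a:ℝ) - (n:ℝ)/2| = (n:ℝ)/2 - a := by
      rw [abs_of_nonpos (by linarith)]; ring
    rw [habs] at h
    exact tail_low hε hε2 han (by linarith)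
  · have habs : |(a:ℝ) - (n:ℝ)/2| = (a:ℝ) - (n:ℝ)/2 := by
      rw [abs_of_pos (by linarith)]
    rw [habs] at h
    have hsymm : n.choose a = n.choose (n - a) := (Nat.choose_symm han).symm
    rw [hsymm]
    have hcast : ((n - a : ℕ) : ℝ) = (n:ℝ) - a := by
      rw [Nat.cast_sub han]
    exact tail_low hε hε2 (by omega) (by rw [hcast]; linarith)

lemma eventually_sq {c : ℝ} (hc : 0 < c) :
    ∃ n₀ : ℕ, ∀ n : ℕ, n₀ ≤ n → ((n:ℝ) + 1)^2 ≤ Real.exp (c * n) := by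
  have h1 : Tendsto (fun nn : ℕ => Real.exp (c * nn) / (c * nn)^2) atTop atTop :=
    (Real.tendsto_exp_div_pow_atTop 2).comp
      (Tendsto.const_mul_atTop hc tendsto_natCast_atTop_atTop)
  have h2 := h1.eventually_ge_atTop (4 / c^2)
  obtain ⟨n₀, hn₀⟩ := eventually_atTop.mp (h2.and (eventually_ge_atTop 1))
  refine ⟨n₀, fun n hn => ?_⟩
  obtain ⟨hA, hB⟩ := hn₀ n hn
  have hn1 : (1:ℝ) ≤ n := by exact_mod_cast hB
  have hcn : (0:ℝ) < c * n := mul_pos hc (by linarith)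
  have h4 : 4 / c^2 * (c*n)^2 ≤ Real.exp (c*n) := by
    rw [le_div_iff₀ (by positivity)] at hA
    linarith
  have h5 : 4 / c^2 * (c*(n:ℝ))^2 = 4 * (n:ℝ)^2 := by
    field_simp
  nlinarith


lemma expHnm_eq (n k m : ℕ) (f : Finset (Finset (Fin n)) → ℝ) :
    expHnm n k m f = (((kSets n k).card.choose m : ℕ) : ℝ)⁻¹ *
      ∑ H ∈ (kSets n k).powersetCard m, f H := by
  unfold expHnm probHnm
  have h1 : (Finset.univ : Finset (Finset (Finset (Fin n)))).filter
      (fun H => H ⊆ kSets n k ∧ H.card = m) = (kSets n k).powersetCard m := by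
    ext H
    simp [Finset.mem_powersetCard]
  rw [Finset.mul_sum]
  rw [← h1, Finset.sum_filter]
  refine Finset.sum_congr rfl fun H _ => ?_
  split_ifs with h
  · rfl
  · rw [zero_mul]

lemma exp_monoCount {n k : ℕ} {β : ℝ} {H : Finset (Finset (Fin n))}
    (hH : H ⊆ kSets n k) (σ : Fin n → Bool) :
    Real.exp (-β * (monoCount H σ : ℝ)) = (Real.exp (-β)) ^ (H ∩ monoS k σ).card := by
  have h1 : H.filter (fun e => isMono σ e) = H ∩ monoS k σ := by
    ext e
    simp only [monoS, Finset.mem_filter, Finset.mem_inter]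
    constructor
    · rintro ⟨he, hm⟩
      exact ⟨he, hH he, hm⟩
    · tauto
  have h2 : monoCount H σ = (H ∩ monoS k σ).card := by
    rw [monoCount, h1]
  rw [h2, mul_comm, Real.exp_nat_mul]

lemma bad_card_le {n : ℕ} {ε : ℝ} (hε : 0 < ε) (hε2 : ε ≤ 1/2) :
    ((((Finset.univ : Finset (Fin n → Bool))).filter
        (fun σ => ε * n < |(numPlus σ : ℝ) - (n:ℝ)/2|)).card : ℝ)
      ≤ ((n:ℝ) + 1) * (2 ^ n * Real.exp (-(ε^2/2) * n)) := by
  classical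
  set Bad := ((Finset.univ : Finset (Fin n → Bool))).filter
      (fun σ => ε * n < |(numPlus σ : ℝ) - (n:ℝ)/2|) with hBad
  have h1 : Bad.card = ∑ a ∈ Finset.range (n + 1), (Bad.filter fun σ => numPlus σ = a).card :=
    Finset.card_eq_sum_card_fiberwise
      (fun σ _ => Finset.mem_range.mpr (by have := numPlus_le n σ; omega))
  have h2 : ∀ a ∈ Finset.range (n + 1),
      ((Bad.filter fun σ => numPlus σ = a).card : ℝ)
        ≤ 2 ^ n * Real.exp (-(ε^2/2) * n) := by
    intro a ha
    have han : a ≤ n := by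
      have := Finset.mem_range.mp ha; omega
    by_cases hne : (Bad.filter fun σ => numPlus σ = a).Nonempty
    · obtain ⟨σ, hσ⟩ := hne
      simp only [hBad, Finset.filter_filter, Finset.mem_filter, Finset.mem_univ, true_and] at hσ
      obtain ⟨hσbad, hσa⟩ := hσ
      rw [hσa] at hσbad
      have hsub : (Bad.filter fun σ => numPlus σ = a)
          ⊆ (Finset.univ : Finset (Fin n → Bool)).filter (fun σ => numPlus σ = a) := by
        intro τ hτ
        simp only [hBad, Finset.filter_filter, Finset.mem_filter, Finset.mem_univ,
          true_and] at hτ ⊢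
        exact hτ.2
      have hcle : (Bad.filter fun σ => numPlus σ = a).card ≤ n.choose a := by
        rw [← slice_card n a han]
        exact Finset.card_le_card hsub
      calc ((Bad.filter fun σ => numPlus σ = a).card : ℝ) ≤ (n.choose a : ℝ) := by
            exact_mod_cast hcle
        _ ≤ 2 ^ n * Real.exp (-(ε^2/2) * n) := tail_bound hε hε2 han hσbad
    · rw [Finset.not_nonempty_iff_eq_empty] at hne
      rw [hne]
      simp only [Finset.card_empty, Nat.cast_zero]
      positivity
  calc (Bad.card : ℝ) = ∑ a ∈ Finset.range (n + 1),
        ((Bad.filter fun σ => numPlus σ = a).card : ℝ) := by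
        rw [h1]; push_cast; rfl
    _ ≤ ∑ _a ∈ Finset.range (n + 1), 2 ^ n * Real.exp (-(ε^2/2) * n) :=
        Finset.sum_le_sum h2
    _ = ((n:ℝ) + 1) * (2 ^ n * Real.exp (-(ε^2/2) * n)) := by
        rw [Finset.sum_const, Finset.card_range, nsmul_eq_mul]
        push_cast; ring

lemma middle_ge {n : ℕ} : (2:ℝ) ^ n ≤ ((n:ℝ) + 1) * (n.choose (n / 2) : ℝ) := by
  have h2 : (2:ℕ) ^ n ≤ (n + 1) * n.choose (n / 2) := by
    rw [← Nat.sum_range_choose n]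
    calc ∑ i ∈ Finset.range (n + 1), n.choose i
        ≤ ∑ _i ∈ Finset.range (n + 1), n.choose (n / 2) :=
          Finset.sum_le_sum (fun i _ => Nat.choose_le_middle i n)
      _ = (n + 1) * n.choose (n / 2) := by
          rw [Finset.sum_const, Finset.card_range, smul_eq_mul]
  exact_mod_cast h2

end Aux7

theorem statement_7 (k : ℕ) (hk : 3 ≤ k) (d β : ℝ) (hd : 0 < d) (hβ : 0 ≤ β)
    (ε : ℝ) (hε : 0 < ε) :
    ∃ δ : ℝ, 0 < δ ∧ ∃ n0 : ℕ, ∀ n : ℕ, n0 ≤ n →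
      expHnm n k (mOf d k n) (fun H =>
          ∑ σ : Fin n → Bool,
            if ε * n < |(numPlus σ : ℝ) - n / 2| then
              Real.exp (-β * (monoCount H σ : ℝ))
            else 0)
        ≤ Real.exp (-δ * n) * expHnm n k (mOf d k n) (Zp β) := by
  classical
  set ε' : ℝ := min ε (1/2) with hε'def
  have hε'0 : 0 < ε' := lt_min hε (by norm_num)
  have hε'2 : ε' ≤ 1/2 := min_le_right _ _
  have hε'ε : ε' ≤ ε := min_le_left _ _
  have hδ0 : 0 < ε' ^ 2 / 4 := by positivity
  obtain ⟨n₁, hn₁⟩ := Aux7.eventually_sq hδ0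
  refine ⟨ε' ^ 2 / 4, hδ0, n₁, fun n hn => ?_⟩
  set m := mOf d k n with hmdef
  set x : ℝ := Real.exp (-β) with hxdef
  have hx0 : 0 < x := Real.exp_pos _
  have hx1 : x ≤ 1 := by
    rw [hxdef, ← Real.exp_zero]
    exact Real.exp_le_exp.mpr (by linarith)
  have hk1 : 1 ≤ k := by omega
  rw [Aux7.expHnm_eq, Aux7.expHnm_eq]
  beta_reduce
  have hswap1 : (∑ H ∈ (kSets n k).powersetCard m, ∑ σ : Fin n → Bool,
        if ε * n < |(numPlus σ : ℝ) - n / 2| then Real.exp (-β * (monoCount H σ : ℝ)) else 0)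
      = ∑ σ ∈ (Finset.univ.filter fun σ : Fin n → Bool =>
          ε * n < |(numPlus σ : ℝ) - n / 2|), Aux7.Fx n k m x (Aux7.monoS k σ) := by
    rw [Finset.sum_comm, Finset.sum_filter]
    refine Finset.sum_congr rfl fun σ _ => ?_
    by_cases hb : ε * n < |(numPlus σ : ℝ) - n / 2|
    · simp only [if_pos hb]
      refine Finset.sum_congr rfl fun H hH => ?_
      exact Aux7.exp_monoCount (Finset.mem_powersetCard.mp hH).1 σ
    · simp only [if_neg hb, Finset.sum_const_zero]
  have hswap2 : (∑ H ∈ (kSets n k).powersetCard m, Zp β H)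
      = ∑ σ : Fin n → Bool, Aux7.Fx n k m x (Aux7.monoS k σ) := by
    unfold Zp
    rw [Finset.sum_comm]
    refine Finset.sum_congr rfl fun σ _ => ?_
    refine Finset.sum_congr rfl fun H hH => ?_
    exact Aux7.exp_monoCount (Finset.mem_powersetCard.mp hH).1 σ
  rw [hswap1, hswap2]
  -- the middle slice and the extremal set
  have hdle : n / 2 ≤ n := Nat.div_le_self n 2
  have hslicecard := Aux7.slice_card n (n / 2) hdle
  have hslicepos : 0 < ((Finset.univ : Finset (Fin n → Bool)).filter
      fun σ => numPlus σ = n / 2).card := by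
    rw [hslicecard]; exact Nat.choose_pos hdle
  obtain ⟨τ₀, hτ₀⟩ := Finset.card_pos.mp hslicepos
  have hτ₀np : numPlus τ₀ = n / 2 := (Finset.mem_filter.mp hτ₀).2
  have hF₀ : 0 ≤ Aux7.Fx n k m x (Aux7.monoS k τ₀) := Aux7.Fx_nonneg hx0.le _
  have hcard₀ : (Aux7.monoS k τ₀).card = (n / 2).choose k + (n - n / 2).choose k := by
    rw [Aux7.monoS_card hk1, hτ₀np]
  have hFle : ∀ σ : Fin n → Bool,
      Aux7.Fx n k m x (Aux7.monoS k σ) ≤ Aux7.Fx n k m x (Aux7.monoS k τ₀) := by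
    intro σ
    refine Aux7.Fx_le_of_card_le hx0.le hx1 (Aux7.monoS_subset σ) (Aux7.monoS_subset τ₀) ?_
    rw [hcard₀, Aux7.monoS_card hk1]
    exact Aux7.unimodal hk1 (numPlus σ) (Aux7.numPlus_le n σ)
  -- bound the bad sum
  have hsub : ((Finset.univ : Finset (Fin n → Bool)).filter fun σ =>
        ε * n < |(numPlus σ : ℝ) - n / 2|)
      ⊆ ((Finset.univ : Finset (Fin n → Bool)).filter fun σ =>
        ε' * n < |(numPlus σ : ℝ) - n / 2|) := by
    intro σ hσ
    simp only [Finset.mem_filter, Finset.mem_univ, true_and] at hσ ⊢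
    have : ε' * n ≤ ε * n := mul_le_mul_of_nonneg_right hε'ε (Nat.cast_nonneg n)
    linarith
  have hchain1 : (∑ σ ∈ (Finset.univ.filter fun σ : Fin n → Bool =>
        ε * n < |(numPlus σ : ℝ) - n / 2|), Aux7.Fx n k m x (Aux7.monoS k σ))
      ≤ ∑ σ ∈ (Finset.univ.filter fun σ : Fin n → Bool =>
        ε' * n < |(numPlus σ : ℝ) - n / 2|), Aux7.Fx n k m x (Aux7.monoS k σ) :=
    Finset.sum_le_sum_of_subset_of_nonneg hsub
      (fun σ _ _ => Aux7.Fx_nonneg hx0.le _)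
  have hchain2 : (∑ σ ∈ (Finset.univ.filter fun σ : Fin n → Bool =>
        ε' * n < |(numPlus σ : ℝ) - n / 2|), Aux7.Fx n k m x (Aux7.monoS k σ))
      ≤ (((Finset.univ.filter fun σ : Fin n → Bool =>
        ε' * n < |(numPlus σ : ℝ) - n / 2|).card : ℝ))
        * Aux7.Fx n k m x (Aux7.monoS k τ₀) := by
    have := Finset.sum_le_card_nsmul
      (Finset.univ.filter fun σ : Fin n → Bool => ε' * n < |(numPlus σ : ℝ) - n / 2|)
      (fun σ => Aux7.Fx n k m x (Aux7.monoS k σ))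
      (Aux7.Fx n k m x (Aux7.monoS k τ₀)) (fun σ _ => hFle σ)
    rwa [nsmul_eq_mul] at this
  -- lower bound the partition sum
  have hZlower : (n.choose (n / 2) : ℝ) * Aux7.Fx n k m x (Aux7.monoS k τ₀)
      ≤ ∑ σ : Fin n → Bool, Aux7.Fx n k m x (Aux7.monoS k σ) := by
    have heq : ∀ σ ∈ ((Finset.univ : Finset (Fin n → Bool)).filter
        fun σ => numPlus σ = n / 2),
        Aux7.Fx n k m x (Aux7.monoS k σ) = Aux7.Fx n k m x (Aux7.monoS k τ₀) := by
      intro σ hσ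
      refine Aux7.Fx_card_eq (Aux7.monoS_subset σ) (Aux7.monoS_subset τ₀) ?_
      rw [Aux7.monoS_card hk1, Aux7.monoS_card hk1, (Finset.mem_filter.mp hσ).2, hτ₀np]
    have h1 : (∑ σ ∈ ((Finset.univ : Finset (Fin n → Bool)).filter
          fun σ => numPlus σ = n / 2), Aux7.Fx n k m x (Aux7.monoS k σ))
        = (n.choose (n / 2) : ℝ) * Aux7.Fx n k m x (Aux7.monoS k τ₀) := by
      rw [Finset.sum_congr rfl heq, Finset.sum_const, hslicecard, nsmul_eq_mul]
    rw [← h1]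
    exact Finset.sum_le_sum_of_subset_of_nonneg (Finset.filter_subset _ _)
      (fun σ _ _ => Aux7.Fx_nonneg hx0.le _)
  -- numeric bounds
  have hbadcard := Aux7.bad_card_le (n := n) hε'0 hε'2
  have hmid := Aux7.middle_ge (n := n)
  have hsq := hn₁ n hn
  have hn1 : (0:ℝ) < (n:ℝ) + 1 := by positivity
  have hE2 : (0:ℝ) < Real.exp (-(ε' ^ 2 / 2) * n) := Real.exp_pos _
  have hEE : Real.exp ((ε' ^ 2 / 4) * n) * Real.exp (-(ε' ^ 2 / 2) * n)
      = Real.exp (-(ε' ^ 2 / 4) * n) := by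
    rw [← Real.exp_add]; congr 1; ring
  have t2 : (((n:ℝ) + 1) ^ 2) * 2 ^ n
      ≤ Real.exp ((ε' ^ 2 / 4) * n) * (((n:ℝ) + 1) * (n.choose (n / 2) : ℝ)) :=
    calc (((n:ℝ) + 1) ^ 2) * 2 ^ n
        ≤ Real.exp ((ε' ^ 2 / 4) * n) * 2 ^ n :=
          mul_le_mul_of_nonneg_right hsq (by positivity)
      _ ≤ Real.exp ((ε' ^ 2 / 4) * n) * (((n:ℝ) + 1) * (n.choose (n / 2) : ℝ)) :=
          mul_le_mul_of_nonneg_left hmid (Real.exp_nonneg _)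
  have s1 : ((n:ℝ) + 1) * (2 ^ n * Real.exp (-(ε' ^ 2 / 2) * n)) * ((n:ℝ) + 1)
      ≤ Real.exp (-(ε' ^ 2 / 4) * n) * (n.choose (n / 2) : ℝ) * ((n:ℝ) + 1) :=
    calc ((n:ℝ) + 1) * (2 ^ n * Real.exp (-(ε' ^ 2 / 2) * n)) * ((n:ℝ) + 1)
        = ((((n:ℝ) + 1) ^ 2) * 2 ^ n) * Real.exp (-(ε' ^ 2 / 2) * n) := by ring
      _ ≤ (Real.exp ((ε' ^ 2 / 4) * n) * (((n:ℝ) + 1) * (n.choose (n / 2) : ℝ)))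
            * Real.exp (-(ε' ^ 2 / 2) * n) := mul_le_mul_of_nonneg_right t2 hE2.le
      _ = (Real.exp ((ε' ^ 2 / 4) * n) * Real.exp (-(ε' ^ 2 / 2) * n))
            * (n.choose (n / 2) : ℝ) * ((n:ℝ) + 1) := by ring
      _ = Real.exp (-(ε' ^ 2 / 4) * n) * (n.choose (n / 2) : ℝ) * ((n:ℝ) + 1) := by
            rw [hEE]
  have hnum : ((n:ℝ) + 1) * (2 ^ n * Real.exp (-(ε' ^ 2 / 2) * n))
      ≤ Real.exp (-(ε' ^ 2 / 4) * n) * (n.choose (n / 2) : ℝ) :=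
    le_of_mul_le_mul_right s1 hn1
  have hkey : (((Finset.univ.filter fun σ : Fin n → Bool =>
        ε' * n < |(numPlus σ : ℝ) - n / 2|).card : ℝ))
      ≤ Real.exp (-(ε' ^ 2 / 4) * n) * (n.choose (n / 2) : ℝ) := hbadcard.trans hnum
  -- final assembly
  have hfinal : (∑ σ ∈ (Finset.univ.filter fun σ : Fin n → Bool =>
        ε * n < |(numPlus σ : ℝ) - n / 2|), Aux7.Fx n k m x (Aux7.monoS k σ))
      ≤ Real.exp (-(ε' ^ 2 / 4) * n)
        * ∑ σ : Fin n → Bool, Aux7.Fx n k m x (Aux7.monoS k σ) :=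
    calc (∑ σ ∈ (Finset.univ.filter fun σ : Fin n → Bool =>
          ε * n < |(numPlus σ : ℝ) - n / 2|), Aux7.Fx n k m x (Aux7.monoS k σ))
        ≤ ∑ σ ∈ (Finset.univ.filter fun σ : Fin n → Bool =>
          ε' * n < |(numPlus σ : ℝ) - n / 2|), Aux7.Fx n k m x (Aux7.monoS k σ) := hchain1
      _ ≤ (((Finset.univ.filter fun σ : Fin n → Bool =>
          ε' * n < |(numPlus σ : ℝ) - n / 2|).card : ℝ))
            * Aux7.Fx n k m x (Aux7.monoS k τ₀) := hchain2
      _ ≤ (Real.exp (-(ε' ^ 2 / 4) * n) * (n.choose (n / 2) : ℝ))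
            * Aux7.Fx n k m x (Aux7.monoS k τ₀) :=
          mul_le_mul_of_nonneg_right hkey hF₀
      _ = Real.exp (-(ε' ^ 2 / 4) * n)
            * ((n.choose (n / 2) : ℝ) * Aux7.Fx n k m x (Aux7.monoS k τ₀)) := by ring
      _ ≤ Real.exp (-(ε' ^ 2 / 4) * n)
            * ∑ σ : Fin n → Bool, Aux7.Fx n k m x (Aux7.monoS k σ) :=
          mul_le_mul_of_nonneg_left hZlower (Real.exp_nonneg _)
  have hc : (0:ℝ) ≤ (((kSets n k).card.choose m : ℕ) : ℝ)⁻¹ := by positivity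
  calc (((kSets n k).card.choose m : ℕ) : ℝ)⁻¹
        * ∑ σ ∈ (Finset.univ.filter fun σ : Fin n → Bool =>
            ε * n < |(numPlus σ : ℝ) - n / 2|), Aux7.Fx n k m x (Aux7.monoS k σ)
      ≤ (((kSets n k).card.choose m : ℕ) : ℝ)⁻¹
        * (Real.exp (-(ε' ^ 2 / 4) * n)
            * ∑ σ : Fin n → Bool, Aux7.Fx n k m x (Aux7.monoS k σ)) :=
        mul_le_mul_of_nonneg_left hfinal hc
    _ = Real.exp (-(ε' ^ 2 / 4) * n)
        * ((((kSets n k).card.choose m : ℕ) : ℝ)⁻¹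
            * ∑ σ : Fin n → Bool, Aux7.Fx n k m x (Aux7.monoS k σ)) := by ring
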